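/- arXiv:1308.4067 — 5 statements merged into one kernel-verified Lean document; each statement's English description precedes it below -/
import Mathlib

section
/- Let D = (d_1 ≥ ... ≥ d_n) be a nonincreasing positive integer sequence with maximum d, and define the reverse cumulative histogram Σ = (σ_1 ≤ ... ≤ σ_d) by σ_j = #{i : d_i ≥ d - j + 1}. Then for each j with 1 ≤ j ≤ d, the Erdős–Gallai inequality at k = σ_j is equivalent to: Σ_{i=1}^{j}(σ_i − σ_{i−1})(d − i + 1) ≤ σ_j(σ_j − 1) + Σ_{i=j+1}^{d}(σ_i − σ_{i−1}) min(σ_j, d − i + 1), where σ_0 = 0. -/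
open Finset

/-- A downward-closed filtered set of an antitone-threshold predicate is an initial segment. -/
lemma seg_aux (n : ℕ) (D : ℕ → ℕ) (hanti : ∀ i j, i ≤ j → j < n → D j ≤ D i) (v : ℕ) :
    (Finset.range n).filter (fun i => v ≤ D i)
      = Finset.range (((Finset.range n).filter (fun i => v ≤ D i)).card) := by
  set S := (Finset.range n).filter (fun i => v ≤ D i) with hS
  have hdc : ∀ i k, i ≤ k → k ∈ S → i ∈ S := by
    intro i k hik hk
    simp only [hS, mem_filter, mem_range] at hk ⊢
    exact ⟨lt_of_le_of_lt hik hk.1, le_trans hk.2 (hanti i k hik hk.1)⟩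
  ext i
  simp only [mem_range]
  constructor
  · intro hi
    have hsub : Finset.range (i + 1) ⊆ S := by
      intro k hk
      exact hdc k i (by simpa [Nat.lt_succ_iff] using hk) hi
    have := Finset.card_le_card hsub
    simpa using this
  · intro hi
    by_contra hiS
    have hsub : S ⊆ Finset.range i := by
      intro k hk
      simp only [mem_range]
      rcases lt_or_ge k i with h | h
      · exact h
      · exact absurd (hdc i k h hk) hiS
    have := Finset.card_le_card hsub
    simp at this
    omega

/-- Fiberwise sum lemma: a value-range filter sum equals the histogram sum. -/
lemma fiber_sum (n d : ℕ) (D : ℕ → ℕ)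
    (hle : ∀ i, i < n → D i ≤ d) (hpos : ∀ i, i < n → 0 < D i)
    (σ : ℕ → ℕ)
    (hσ : ∀ j, σ j = ((Finset.range n).filter (fun i => d - j + 1 ≤ D i)).card)
    (a b : ℕ) (ha : 1 ≤ a) (hb : b ≤ d) (f : ℕ → ℕ) :
    ∑ i ∈ (Finset.range n).filter (fun i => d + 1 ≤ D i + b ∧ D i + a ≤ d + 1), f (D i)
      = ∑ v ∈ Finset.Icc a b, (σ v - σ (v - 1)) * f (d - v + 1) := by
  rw [← Finset.sum_fiberwise_of_maps_to (g := fun i => d + 1 - D i)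
      (t := Finset.Icc a b) ?_ (fun i => f (D i))]
  · apply Finset.sum_congr rfl
    intro v hv
    simp only [Finset.mem_Icc] at hv
    have hfib : ((Finset.range n).filter
          (fun i => d + 1 ≤ D i + b ∧ D i + a ≤ d + 1)).filter (fun i => d + 1 - D i = v)
        = (Finset.range n).filter (fun i => D i = d - v + 1) := by
      rw [Finset.filter_filter]
      apply Finset.filter_congr
      intro i hi
      simp only [mem_range] at hi
      have h1 := hle i hi
      have h2 := hpos i hi
      constructor
      · intro h; omega
      · intro h; omega
    rw [hfib]
    have hconst : ∀ i ∈ (Finset.range n).filter (fun i => D i = d - v + 1),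
        f (D i) = f (d - v + 1) := by
      intro i hi
      simp only [mem_filter] at hi
      rw [hi.2]
    rw [Finset.sum_congr rfl hconst, Finset.sum_const, smul_eq_mul]
    congr 1
    -- card of fiber = σ v - σ (v-1)
    have hsplit : σ v = σ (v - 1) + ((Finset.range n).filter (fun i => D i = d - v + 1)).card := by
      rw [hσ v, hσ (v - 1)]
      have key : ((Finset.range n).filter (fun i => d - (v - 1) + 1 ≤ D i)).card
            + ((Finset.range n).filter (fun i => D i = d - v + 1)).card
          = ((Finset.range n).filter (fun i => d - v + 1 ≤ D i)).card := by
        have e1 : (Finset.range n).filter (fun i => d - (v - 1) + 1 ≤ D i)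
            = ((Finset.range n).filter (fun i => d - v + 1 ≤ D i)).filter
                (fun i => d - v + 2 ≤ D i) := by
          rw [Finset.filter_filter]
          apply Finset.filter_congr
          intro i hi
          simp only [mem_range] at hi
          have h1 := hle i hi
          constructor
          · intro h; omega
          · intro h; omega
        have e2 : (Finset.range n).filter (fun i => D i = d - v + 1)
            = ((Finset.range n).filter (fun i => d - v + 1 ≤ D i)).filter
                (fun i => ¬ (d - v + 2 ≤ D i)) := by
          rw [Finset.filter_filter]
          apply Finset.filter_congr
          intro i hi
          simp only [mem_range] at hi
          have h1 := hle i hi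
          constructor
          · intro h; omega
          · intro h; omega
        rw [e1, e2]
        exact Finset.card_filter_add_card_filter_not _
      omega
    omega
  · intro i hi
    simp only [mem_filter, mem_range, Finset.mem_Icc] at hi ⊢
    have h1 := hle i hi.1
    have h2 := hpos i hi.1
    omega

/-- The Erdős–Gallai inequality at `k = σ_j` is equivalent to its histogram form,
where `σ_j = #{i : d_i ≥ d - j + 1}` is the reverse cumulative histogram of the
nonincreasing positive sequence `D` with maximum `d` (0-indexed: `d_i = D (i-1)`). -/
theorem eg_histogram_form (n d : ℕ) (hn : 0 < n) (D : ℕ → ℕ)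
    (hanti : ∀ i j, i ≤ j → j < n → D j ≤ D i)
    (hpos : ∀ i, i < n → 0 < D i)
    (hmax : D 0 = d)
    (σ : ℕ → ℕ)
    (hσ : ∀ j, σ j = ((Finset.range n).filter (fun i => d - j + 1 ≤ D i)).card) :
    ∀ j, 1 ≤ j → j ≤ d →
      ((∑ i ∈ Finset.range (σ j), D i ≤
          σ j * (σ j - 1) + ∑ i ∈ Finset.Ico (σ j) n, min (σ j) (D i)) ↔
        (∑ i ∈ Finset.Icc 1 j, (σ i - σ (i - 1)) * (d - i + 1) ≤
          σ j * (σ j - 1) +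
            ∑ i ∈ Finset.Icc (j + 1) d, (σ i - σ (i - 1)) * min (σ j) (d - i + 1))) := by
  intro j hj1 hjd
  have hle : ∀ i, i < n → D i ≤ d := fun i hi => hmax ▸ hanti 0 i (Nat.zero_le i) hi
  have hσn : σ j ≤ n := by
    rw [hσ j]
    exact le_trans (Finset.card_filter_le _ _) (by simp)
  have hseg : Finset.range (σ j) = (Finset.range n).filter (fun i => d - j + 1 ≤ D i) := by
    rw [hσ j]; exact (seg_aux n D hanti (d - j + 1)).symm
  -- first sum
  have hsum1 : ∑ i ∈ Finset.range (σ j), D i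
      = ∑ i ∈ Finset.Icc 1 j, (σ i - σ (i - 1)) * (d - i + 1) := by
    rw [hseg]
    rw [← fiber_sum n d D hle hpos σ hσ 1 j le_rfl hjd (fun x => x)]
    apply Finset.sum_congr _ (fun _ _ => rfl)
    apply Finset.filter_congr
    intro i hi
    simp only [mem_range] at hi
    have h1 := hle i hi
    constructor
    · intro h; omega
    · intro h; omega
  -- second sum
  have hsum2 : ∑ i ∈ Finset.Ico (σ j) n, min (σ j) (D i)
      = ∑ i ∈ Finset.Icc (j + 1) d, (σ i - σ (i - 1)) * min (σ j) (d - i + 1) := by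
    have hico : Finset.Ico (σ j) n
        = (Finset.range n).filter (fun i => d + 1 ≤ D i + d ∧ D i + (j + 1) ≤ d + 1) := by
      ext i
      simp only [Finset.mem_Ico, mem_filter, mem_range]
      constructor
      · intro ⟨h1, h2⟩
        have hpi := hpos i h2
        have hli := hle i h2
        refine ⟨h2, by omega, ?_⟩
        by_contra hcon
        have : i ∈ Finset.range (σ j) := by
          rw [hseg]
          simp only [mem_filter, mem_range]
          exact ⟨h2, by omega⟩
        simp only [mem_range] at this
        omega
      · intro ⟨h1, h2, h3⟩
        refine ⟨?_, h1⟩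
        by_contra hcon
        have : i ∈ Finset.range (σ j) := by simp; omega
        rw [hseg] at this
        simp only [mem_filter, mem_range] at this
        omega
    rw [hico, fiber_sum n d D hle hpos σ hσ (j + 1) d (by omega) le_rfl (fun x => min (σ j) x)]
  rw [hsum1, hsum2]
end

section
/- Let D be a degree sequence with maximum d, Σ its reverse cumulative histogram, and Φ = (φ_1,...,φ_d) the associated graphicality deficits. If one entry of D of value d − k + 1 is decreased by one (so σ_k decreases by one and all other σ_j are unchanged, with d held fixed), then the new deficits Φ' satisfy φ'_j = φ_j + 1 for every j > k. -/
/-- Lemma 2(a): after decreasing one entry of value `d − k + 1` by one, the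
Erdős–Gallai slacks satisfy `φ'_j = φ_j + 1` for every `j > k`. -/
theorem phi_drop_above (n d k i₀ : ℕ) (hi₀ : i₀ < n) (hk : 1 ≤ k) (hkd : k ≤ d)
    (D : ℕ → ℕ)
    (hanti : ∀ i j, i ≤ j → j < n → D j ≤ D i)
    (hpos : ∀ i, i < n → 0 < D i)
    (hmaxle : ∀ i, i < n → D i ≤ d)
    (hmaxex : ∃ i, i < n ∧ D i = d)
    (hval : D i₀ = d - k + 1)
    (D' : ℕ → ℕ) (hD' : D' = Function.update D i₀ (d - k))
    (σ σ' : ℕ → ℕ)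
    (hσ : ∀ j, σ j = ((Finset.range n).filter (fun i => d - j + 1 ≤ D i)).card)
    (hσ' : ∀ j, σ' j = ((Finset.range n).filter (fun i => d - j + 1 ≤ D' i)).card)
    (φ φ' : ℕ → ℤ)
    (hφ : ∀ j, φ j =
      (σ j : ℤ) * ((σ j : ℤ) - 1) +
        (∑ i ∈ Finset.Icc (j + 1) d,
          ((σ i : ℤ) - (σ (i - 1) : ℤ)) * min ((σ j : ℤ)) ((d : ℤ) - (i : ℤ) + 1)) -
        ∑ i ∈ Finset.Icc 1 j, ((σ i : ℤ) - (σ (i - 1) : ℤ)) * ((d : ℤ) - (i : ℤ) + 1))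
    (hφ' : ∀ j, φ' j =
      (σ' j : ℤ) * ((σ' j : ℤ) - 1) +
        (∑ i ∈ Finset.Icc (j + 1) d,
          ((σ' i : ℤ) - (σ' (i - 1) : ℤ)) * min ((σ' j : ℤ)) ((d : ℤ) - (i : ℤ) + 1)) -
        ∑ i ∈ Finset.Icc 1 j, ((σ' i : ℤ) - (σ' (i - 1) : ℤ)) * ((d : ℤ) - (i : ℤ) + 1)) :
    ∀ j, k < j → j ≤ d → φ' j = φ j + 1 := by
  intro j hkj hjd
  -- σ' agrees with σ away from k
  have hσeq : ∀ m, m ≤ d → m ≠ k → σ' m = σ m := by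
    intro m hm hne
    rw [hσ, hσ']
    congr 1
    apply Finset.filter_congr
    intro i hi
    rw [hD']
    rcases eq_or_ne i i₀ with rfl | h
    · rw [Function.update_self, hval]
      constructor <;> (intro; omega)
    · rw [Function.update_of_ne h]
  -- σ' k = σ k - 1
  have hi₀mem : i₀ ∈ (Finset.range n).filter (fun i => d - k + 1 ≤ D i) := by
    simp [Finset.mem_filter, hi₀, hval]
  have hσk : (σ' k : ℤ) = (σ k : ℤ) - 1 := by
    have h1 : (Finset.range n).filter (fun i => d - k + 1 ≤ D' i)
        = ((Finset.range n).filter (fun i => d - k + 1 ≤ D i)).erase i₀ := by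
      ext i
      simp only [Finset.mem_erase, Finset.mem_filter, hD']
      rcases eq_or_ne i i₀ with rfl | h
      · rw [Function.update_self]
        constructor
        · intro hc; omega
        · intro hc; exact absurd rfl hc.1
      · rw [Function.update_of_ne h]
        tauto
    have hpos' : 1 ≤ ((Finset.range n).filter (fun i => d - k + 1 ≤ D i)).card :=
      Finset.card_pos.2 ⟨i₀, hi₀mem⟩
    rw [hσ, hσ', h1, Finset.card_erase_of_mem hi₀mem, Nat.cast_sub hpos']
    simp
  rw [hφ, hφ']
  have hjk : j ≠ k := by omega
  have hgj : (σ' j : ℤ) = (σ j : ℤ) := by rw [hσeq j hjd hjk]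
  have hsum1 : ∑ i ∈ Finset.Icc (j+1) d,
        ((σ' i : ℤ) - (σ' (i-1) : ℤ)) * min ((σ' j : ℤ)) ((d : ℤ) - (i : ℤ) + 1)
      = ∑ i ∈ Finset.Icc (j+1) d,
        ((σ i : ℤ) - (σ (i-1) : ℤ)) * min ((σ j : ℤ)) ((d : ℤ) - (i : ℤ) + 1) := by
    apply Finset.sum_congr rfl
    intro i hi
    simp only [Finset.mem_Icc] at hi
    rw [hσeq i (by omega) (by omega), hσeq (i-1) (by omega) (by omega), hgj]
  have hsum2 : ∑ i ∈ Finset.Icc 1 j, ((σ' i : ℤ) - (σ' (i-1) : ℤ)) * ((d : ℤ) - (i : ℤ) + 1)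
      = (∑ i ∈ Finset.Icc 1 j, ((σ i : ℤ) - (σ (i-1) : ℤ)) * ((d : ℤ) - (i : ℤ) + 1)) - 1 := by
    have step : ∀ i ∈ Finset.Icc 1 j,
        ((σ' i : ℤ) - (σ' (i-1) : ℤ)) * ((d : ℤ) - (i : ℤ) + 1)
        = ((σ i : ℤ) - (σ (i-1) : ℤ)) * ((d : ℤ) - (i : ℤ) + 1)
          + ((if i = k then -((d : ℤ) - (k : ℤ) + 1) else 0)
            + (if i = k + 1 then ((d : ℤ) - (k : ℤ)) else 0)) := by
      intro i hi
      simp only [Finset.mem_Icc] at hi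
      rcases eq_or_ne i k with rfl | hik
      · rw [hσk, hσeq (i-1) (by omega) (by omega)]
        simp [show ¬ i = i + 1 by omega]
        ring
      · rcases eq_or_ne i (k+1) with rfl | hik1
        · have h1 : k + 1 - 1 = k := by omega
          rw [h1, hσeq (k+1) (by omega) (by omega), hσk]
          simp [hik]
          push_cast
          ring
        · rw [hσeq i (by omega) hik, hσeq (i-1) (by omega) (by omega)]
          simp [hik, hik1]
    rw [Finset.sum_congr rfl step, Finset.sum_add_distrib, Finset.sum_add_distrib,
      Finset.sum_ite_eq' (Finset.Icc 1 j) k (fun _ => -((d : ℤ) - (k : ℤ) + 1)),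
      Finset.sum_ite_eq' (Finset.Icc 1 j) (k+1) (fun _ => ((d : ℤ) - (k : ℤ)))]
    rw [if_pos (by simp [Finset.mem_Icc]; omega), if_pos (by simp [Finset.mem_Icc]; omega)]
    ring
  rw [hsum1, hsum2, hgj]
  ring
end

section
/- Let D be a degree sequence with maximum d, Σ its reverse cumulative histogram, and Φ the associated Erdős–Gallai slacks. If one entry of D of value d − k + 1 is decreased by one (so σ_k decreases by one, all other σ_j unchanged, d fixed), then for every j < k, the new slack is φ'_j = φ_j − 1 if k + σ_j > d, and φ'_j = φ_j otherwise. -/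
/-- Lemma 2(c): after decreasing one entry of value `d − k + 1` by one, for `j < k`
the slack satisfies `φ'_j = φ_j − 1` if `k + σ_j > d` and `φ'_j = φ_j` otherwise. -/
theorem phi_drop_below (n d k i₀ : ℕ) (hi₀ : i₀ < n) (hk : 1 ≤ k) (hkd : k ≤ d)
    (D : ℕ → ℕ)
    (hanti : ∀ i j, i ≤ j → j < n → D j ≤ D i)
    (hpos : ∀ i, i < n → 0 < D i)
    (hmaxle : ∀ i, i < n → D i ≤ d)
    (hmaxex : ∃ i, i < n ∧ D i = d)
    (hval : D i₀ = d - k + 1)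
    (D' : ℕ → ℕ) (hD' : D' = Function.update D i₀ (d - k))
    (σ σ' : ℕ → ℕ)
    (hσ : ∀ j, σ j = ((Finset.range n).filter (fun i => d - j + 1 ≤ D i)).card)
    (hσ' : ∀ j, σ' j = ((Finset.range n).filter (fun i => d - j + 1 ≤ D' i)).card)
    (φ φ' : ℕ → ℤ)
    (hφ : ∀ j, φ j =
      (σ j : ℤ) * ((σ j : ℤ) - 1) +
        (∑ i ∈ Finset.Icc (j + 1) d,
          ((σ i : ℤ) - (σ (i - 1) : ℤ)) * min ((σ j : ℤ)) ((d : ℤ) - (i : ℤ) + 1)) -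
        ∑ i ∈ Finset.Icc 1 j, ((σ i : ℤ) - (σ (i - 1) : ℤ)) * ((d : ℤ) - (i : ℤ) + 1))
    (hφ' : ∀ j, φ' j =
      (σ' j : ℤ) * ((σ' j : ℤ) - 1) +
        (∑ i ∈ Finset.Icc (j + 1) d,
          ((σ' i : ℤ) - (σ' (i - 1) : ℤ)) * min ((σ' j : ℤ)) ((d : ℤ) - (i : ℤ) + 1)) -
        ∑ i ∈ Finset.Icc 1 j, ((σ' i : ℤ) - (σ' (i - 1) : ℤ)) * ((d : ℤ) - (i : ℤ) + 1)) :
    ∀ j, 1 ≤ j → j < k → φ' j = if d < k + σ j then φ j - 1 else φ j := by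
  have hD'pt : ∀ i, D' i = if i = i₀ then d - k else D i := by
    intro i; rw [hD']; by_cases h : i = i₀ <;> simp [Function.update, h]
  have hSeq : ∀ m, m ≤ d → m ≠ k → σ' m = σ m := by
    intro m hmd hmk
    rw [hσ, hσ']
    congr 1
    apply Finset.filter_congr
    intro i _
    rw [hD'pt]
    by_cases h : i = i₀
    · subst h
      rw [if_pos rfl, hval]
      constructor <;> intro <;> omega
    · rw [if_neg h]
  have hi₀mem : i₀ ∈ (Finset.range n).filter (fun i => d - k + 1 ≤ D i) := by
    simp [Finset.mem_filter, hi₀, hval]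
  have hSk : σ' k + 1 = σ k := by
    rw [hσ, hσ']
    have hfe : (Finset.range n).filter (fun i => d - k + 1 ≤ D' i)
        = ((Finset.range n).filter (fun i => d - k + 1 ≤ D i)).erase i₀ := by
      ext i
      simp only [Finset.mem_filter, Finset.mem_erase, Finset.mem_range]
      rw [hD'pt]
      by_cases h : i = i₀
      · subst h
        rw [if_pos rfl]
        constructor
        · intro ⟨_, hle⟩; omega
        · intro ⟨hne, _⟩; exact absurd rfl hne
      · rw [if_neg h]; tauto
    rw [hfe, Finset.card_erase_of_mem hi₀mem]
    have : 1 ≤ ((Finset.range n).filter (fun i => d - k + 1 ≤ D i)).card :=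
      Finset.card_pos.mpr ⟨i₀, hi₀mem⟩
    omega
  intro j hj1 hjk
  have hσ'j : σ' j = σ j := hSeq j (by omega) (by omega)
  have hkmem : k ∈ Finset.Icc (j + 1) d := by simp [Finset.mem_Icc]; omega
  set A : ℤ := min ((σ j : ℤ)) ((d : ℤ) - (k : ℤ) + 1) with hA
  set B : ℤ := min ((σ j : ℤ)) ((d : ℤ) - (k : ℤ)) with hB
  have hsumdiff :
      (∑ i ∈ Finset.Icc (j + 1) d,
          ((σ' i : ℤ) - (σ' (i - 1) : ℤ)) * min ((σ j : ℤ)) ((d : ℤ) - (i : ℤ) + 1))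
      - (∑ i ∈ Finset.Icc (j + 1) d,
          ((σ i : ℤ) - (σ (i - 1) : ℤ)) * min ((σ j : ℤ)) ((d : ℤ) - (i : ℤ) + 1))
      = -A + (if k + 1 ∈ Finset.Icc (j + 1) d then B else 0) := by
    rw [← Finset.sum_sub_distrib]
    have hterm : ∀ i ∈ Finset.Icc (j + 1) d,
        ((σ' i : ℤ) - (σ' (i - 1) : ℤ)) * min ((σ j : ℤ)) ((d : ℤ) - (i : ℤ) + 1)
        - ((σ i : ℤ) - (σ (i - 1) : ℤ)) * min ((σ j : ℤ)) ((d : ℤ) - (i : ℤ) + 1)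
        = (if i = k then -A else 0) + (if i = k + 1 then B else 0) := by
      intro i hi
      simp only [Finset.mem_Icc] at hi
      by_cases h1 : i = k
      · rw [h1]
        have h2 : σ' (k - 1) = σ (k - 1) := hSeq _ (by omega) (by omega)
        have h3 : (σ' k : ℤ) = (σ k : ℤ) - 1 := by omega
        rw [h2, h3]
        have e1 : (if k = k then -A else 0) = -A := if_pos rfl
        have e2 : (if k = k + 1 then B else 0) = 0 := if_neg (by omega)
        rw [e1, e2, hA]
        ring
      · by_cases h2 : i = k + 1
        · subst h2
          have h3 : σ' (k + 1) = σ (k + 1) := hSeq _ (by omega) (by omega)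
          have h4 : (σ' (k + 1 - 1) : ℤ) = (σ (k + 1 - 1) : ℤ) - 1 := by
            simp only [Nat.add_sub_cancel]; omega
          rw [h3, h4]
          have e1 : (if k + 1 = k then -A else 0) = 0 := if_neg (by omega)
          have e2 : (if k + 1 = k + 1 then B else 0) = B := if_pos rfl
          have hm : (d : ℤ) - ((k + 1 : ℕ) : ℤ) + 1 = (d : ℤ) - (k : ℤ) := by
            push_cast; ring
          rw [e1, e2, hm, hB]
          ring
        · have h3 : σ' i = σ i := hSeq _ (by omega) (by omega)
          have h4 : σ' (i - 1) = σ (i - 1) := hSeq _ (by omega) (by omega)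
          rw [h3, h4, if_neg h1, if_neg h2]
          ring
    rw [Finset.sum_congr rfl hterm, Finset.sum_add_distrib,
      Finset.sum_ite_eq' _ k (fun _ => -A), Finset.sum_ite_eq' _ (k+1) (fun _ => B),
      if_pos hkmem]
  have hlast : (∑ i ∈ Finset.Icc 1 j, ((σ' i : ℤ) - (σ' (i - 1) : ℤ)) * ((d : ℤ) - (i : ℤ) + 1))
      = ∑ i ∈ Finset.Icc 1 j, ((σ i : ℤ) - (σ (i - 1) : ℤ)) * ((d : ℤ) - (i : ℤ) + 1) := by
    apply Finset.sum_congr rfl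
    intro i hi
    simp only [Finset.mem_Icc] at hi
    rw [hSeq i (by omega) (by omega), hSeq (i-1) (by omega) (by omega)]
  have key : φ' j = φ j - A + (if k + 1 ∈ Finset.Icc (j + 1) d then B else 0) := by
    rw [hφ, hφ', hσ'j, hlast]
    linarith [hsumdiff]
  rw [key]
  have hmemiff : k + 1 ∈ Finset.Icc (j + 1) d ↔ k < d := by
    simp [Finset.mem_Icc]; omega
  have hσj0 : (0 : ℤ) ≤ (σ j : ℤ) := Int.natCast_nonneg _
  by_cases hcond : d < k + σ j
  · rw [if_pos hcond]
    have hσjZ : (d : ℤ) < (k : ℤ) + (σ j : ℤ) := by exact_mod_cast hcond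
    have hkZ : (k : ℤ) ≤ (d : ℤ) := by exact_mod_cast hkd
    have hAv : A = (d : ℤ) - (k : ℤ) + 1 := by
      rw [hA]; exact min_eq_right (by omega)
    by_cases hkd' : k < d
    · rw [if_pos (hmemiff.mpr hkd')]
      have hdZ : (k : ℤ) < (d : ℤ) := by exact_mod_cast hkd'
      have hBv : B = (d : ℤ) - (k : ℤ) := by
        rw [hB]; exact min_eq_right (by omega)
      rw [hAv, hBv]; ring
    · rw [if_neg (fun h => hkd' (hmemiff.mp h))]
      have hkd2 : (k : ℤ) = (d : ℤ) := by
        have h5 : k = d := by omega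
        exact_mod_cast h5
      have h1 : (d : ℤ) - (k : ℤ) + 1 = 1 := by rw [hkd2]; ring
      have hAv2 : A = 1 := by
        rw [hA, h1]; exact min_eq_right (by omega)
      rw [hAv2]; ring
  · rw [if_neg hcond]
    have hσjZ : (k : ℤ) + (σ j : ℤ) ≤ (d : ℤ) := by exact_mod_cast Nat.not_lt.mp hcond
    have hAv : A = (σ j : ℤ) := by
      rw [hA]; exact min_eq_left (by omega)
    by_cases hkd' : k < d
    · rw [if_pos (hmemiff.mpr hkd')]
      have hBv : B = (σ j : ℤ) := by
        rw [hB]; exact min_eq_left (by omega)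
      rw [hAv, hBv]; ring
    · rw [if_neg (fun h => hkd' (hmemiff.mp h))]
      have hkd2 : (k : ℤ) = (d : ℤ) := by
        have h5 : k = d := by omega
        exact_mod_cast h5
      have : (σ j : ℤ) = 0 := by omega
      rw [hAv, this]; ring
end

section
/- Let D be a degree sequence with maximum d, Σ its reverse cumulative histogram, and Φ the associated Erdős–Gallai slacks. If one entry of D of value d − k + 1 is decreased by one (σ_k ↦ σ_k − 1, other σ_j fixed, d fixed), then φ'_k = φ_k + (d − k + 1) − 2(σ_k − 1) + min(σ_k − 1, d − k) − max(0, σ_{d−σ_k+1} − σ_k), interpreting σ_i = 0 for i < 1 and σ_i = σ_d for i > d. -/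
private lemma tele_sigma (g : ℕ → ℤ) (a : ℕ) : ∀ b, a ≤ b →
    ∑ i ∈ Finset.Icc (a+1) b, (g (i-1) - g i) = g a - g b := by
  intro b
  induction b with
  | zero =>
    intro h
    have : a = 0 := by omega
    subst this
    simp
  | succ b ih =>
    intro h
    rcases Nat.lt_or_ge a (b+1) with h1 | h2
    · have ha : a ≤ b := by omega
      rw [Finset.sum_Icc_succ_top (by omega), ih ha]
      have hb : (b+1) - 1 = b := by omega
      rw [hb]; ring
    · have : a = b + 1 := by omega
      subst this
      simp

/-- Lemma 2(b): after decreasing one entry of value `d − k + 1` by one, the slack at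
`j = k` changes by `(d−k+1) − 2(σ_k−1) + min(σ_k−1, d−k) − max(0, σ_{d−σ_k+1} − σ_k)`. -/
theorem phi_drop_at (n d k i₀ : ℕ) (hi₀ : i₀ < n) (hk : 1 ≤ k) (hkd : k ≤ d)
    (D : ℕ → ℕ)
    (hanti : ∀ i j, i ≤ j → j < n → D j ≤ D i)
    (hpos : ∀ i, i < n → 0 < D i)
    (hmaxle : ∀ i, i < n → D i ≤ d)
    (hmaxex : ∃ i, i < n ∧ D i = d)
    (hval : D i₀ = d - k + 1)
    (D' : ℕ → ℕ) (hD' : D' = Function.update D i₀ (d - k))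
    (σ σ' : ℕ → ℕ)
    (hσ : ∀ j, σ j = ((Finset.range n).filter (fun i => d - j + 1 ≤ D i)).card)
    (hσ' : ∀ j, σ' j = ((Finset.range n).filter (fun i => d - j + 1 ≤ D' i)).card)
    (φ φ' : ℕ → ℤ)
    (hφ : ∀ j, φ j =
      (σ j : ℤ) * ((σ j : ℤ) - 1) +
        (∑ i ∈ Finset.Icc (j + 1) d,
          ((σ i : ℤ) - (σ (i - 1) : ℤ)) * min ((σ j : ℤ)) ((d : ℤ) - (i : ℤ) + 1)) -
        ∑ i ∈ Finset.Icc 1 j, ((σ i : ℤ) - (σ (i - 1) : ℤ)) * ((d : ℤ) - (i : ℤ) + 1))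
    (hφ' : ∀ j, φ' j =
      (σ' j : ℤ) * ((σ' j : ℤ) - 1) +
        (∑ i ∈ Finset.Icc (j + 1) d,
          ((σ' i : ℤ) - (σ' (i - 1) : ℤ)) * min ((σ' j : ℤ)) ((d : ℤ) - (i : ℤ) + 1)) -
        ∑ i ∈ Finset.Icc 1 j, ((σ' i : ℤ) - (σ' (i - 1) : ℤ)) * ((d : ℤ) - (i : ℤ) + 1)) :
    φ' k = φ k + ((d : ℤ) - (k : ℤ) + 1) - 2 * ((σ k : ℤ) - 1) +
      min ((σ k : ℤ) - 1) ((d : ℤ) - (k : ℤ)) -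
      max 0 ((σ (d - σ k + 1) : ℤ) - (σ k : ℤ)) := by
  have hd1 : 1 ≤ d := le_trans hk hkd
  have hmem : i₀ ∈ (Finset.range n).filter (fun i => d - k + 1 ≤ D i) :=
    Finset.mem_filter.2 ⟨Finset.mem_range.2 hi₀, by omega⟩
  have hσmono : ∀ j j', j ≤ j' → σ j ≤ σ j' := by
    intro j j' h
    rw [hσ, hσ]
    apply Finset.card_le_card
    intro i hi
    simp only [Finset.mem_filter, Finset.mem_range] at hi ⊢
    exact ⟨hi.1, by omega⟩
  have hσk1 : 1 ≤ σ k := by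
    rw [hσ]
    exact Finset.card_pos.mpr ⟨i₀, hmem⟩
  have hσ'k : (σ' k : ℤ) = (σ k : ℤ) - 1 := by
    have hset : (Finset.range n).filter (fun i => d - k + 1 ≤ D' i)
        = ((Finset.range n).filter (fun i => d - k + 1 ≤ D i)).erase i₀ := by
      ext i
      simp only [Finset.mem_filter, Finset.mem_range, Finset.mem_erase, hD']
      rcases eq_or_ne i i₀ with rfl | hne
      · simp only [Function.update_self, ne_eq, not_true_eq_false, false_and, iff_false,
          not_and]
        intro _
        omega
      · simp [Function.update_of_ne hne, hne]
    have h1 : 1 ≤ ((Finset.range n).filter (fun i => d - k + 1 ≤ D i)).card :=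
      Finset.card_pos.mpr ⟨i₀, hmem⟩
    rw [hσ' k, hset, Finset.card_erase_of_mem hmem, hσ k]
    omega
  have hσ'eq : ∀ j, j ≤ d → j ≠ k → σ' j = σ j := by
    intro j hj hjk
    rw [hσ', hσ, hD']
    congr 1
    apply Finset.filter_congr
    intro i _
    rcases eq_or_ne i i₀ with rfl | hne
    · simp only [Function.update_self, hval]
      constructor <;> intro <;> omega
    · rw [Function.update_of_ne hne]
  -- lower sum
  have hA : ∑ i ∈ Finset.Icc 1 k, ((σ' i : ℤ) - (σ' (i - 1) : ℤ)) * ((d : ℤ) - (i : ℤ) + 1)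
      = (∑ i ∈ Finset.Icc 1 k, ((σ i : ℤ) - (σ (i - 1) : ℤ)) * ((d : ℤ) - (i : ℤ) + 1))
        - ((d : ℤ) - (k : ℤ) + 1) := by
    have key : ∀ i ∈ Finset.Icc 1 k,
        ((σ' i : ℤ) - (σ' (i - 1) : ℤ)) * ((d : ℤ) - (i : ℤ) + 1)
        = ((σ i : ℤ) - (σ (i - 1) : ℤ)) * ((d : ℤ) - (i : ℤ) + 1)
          + (if i = k then -((d : ℤ) - (k : ℤ) + 1) else 0) := by
      intro i hi
      simp only [Finset.mem_Icc] at hi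
      have hi1 : σ' (i - 1) = σ (i - 1) := hσ'eq (i - 1) (by omega) (by omega)
      rcases eq_or_ne i k with rfl | hne
      · rw [hi1, if_pos rfl, hσ'k]
        ring
      · rw [hσ'eq i (by omega) hne, hi1, if_neg hne]
        ring
    rw [Finset.sum_congr rfl key, Finset.sum_add_distrib, Finset.sum_ite_eq' (Finset.Icc 1 k) k]
    rw [if_pos (Finset.mem_Icc.mpr ⟨hk, le_refl k⟩)]
    ring
  -- middle sum
  have hB : ∑ i ∈ Finset.Icc (k + 1) d,
        ((σ' i : ℤ) - (σ' (i - 1) : ℤ)) * min ((σ' k : ℤ)) ((d : ℤ) - (i : ℤ) + 1)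
      = (∑ i ∈ Finset.Icc (k + 1) d,
          ((σ i : ℤ) - (σ (i - 1) : ℤ)) * min ((σ k : ℤ)) ((d : ℤ) - (i : ℤ) + 1))
        + min ((σ k : ℤ) - 1) ((d : ℤ) - (k : ℤ))
        - max 0 ((σ (d - σ k + 1) : ℤ) - (σ k : ℤ)) := by
    have key : ∀ i ∈ Finset.Icc (k + 1) d,
        ((σ' i : ℤ) - (σ' (i - 1) : ℤ)) * min ((σ' k : ℤ)) ((d : ℤ) - (i : ℤ) + 1)
        = ((σ i : ℤ) - (σ (i - 1) : ℤ)) * min ((σ k : ℤ)) ((d : ℤ) - (i : ℤ) + 1)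
          + (if i = k + 1 then min ((σ k : ℤ) - 1) ((d : ℤ) - (k : ℤ)) else 0)
          + (if i ≤ d - σ k + 1 then ((σ (i - 1) : ℤ) - (σ i : ℤ)) else 0) := by
      intro i hi
      simp only [Finset.mem_Icc] at hi
      have hii : σ' i = σ i := hσ'eq i hi.2 (by omega)
      rcases eq_or_ne i (k + 1) with rfl | hne
      · have hprev : (k + 1) - 1 = k := by omega
        rw [hii, hprev, hσ'k, if_pos rfl]
        have hx : (d : ℤ) - ((k + 1 : ℕ) : ℤ) + 1 = (d : ℤ) - (k : ℤ) := by push_cast; ring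
        rw [hx]
        split_ifs with h
        · have e1 : min ((σ k : ℤ) - 1) ((d : ℤ) - (k : ℤ)) = (σ k : ℤ) - 1 := by omega
          have e2 : min ((σ k : ℤ)) ((d : ℤ) - (k : ℤ)) = (σ k : ℤ) := by omega
          rw [e1, e2]; ring
        · have e1 : min ((σ k : ℤ) - 1) ((d : ℤ) - (k : ℤ)) = (d : ℤ) - (k : ℤ) := by omega
          have e2 : min ((σ k : ℤ)) ((d : ℤ) - (k : ℤ)) = (d : ℤ) - (k : ℤ) := by omega
          rw [e1, e2]; ring
      · have hi1 : σ' (i - 1) = σ (i - 1) := hσ'eq (i - 1) (by omega) (by omega)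
        rw [hii, hi1, hσ'k, if_neg hne]
        split_ifs with h
        · have e1 : min ((σ k : ℤ) - 1) ((d : ℤ) - (i : ℤ) + 1) = (σ k : ℤ) - 1 := by omega
          have e2 : min ((σ k : ℤ)) ((d : ℤ) - (i : ℤ) + 1) = (σ k : ℤ) := by omega
          rw [e1, e2]; ring
        · have e1 : min ((σ k : ℤ) - 1) ((d : ℤ) - (i : ℤ) + 1) = (d : ℤ) - (i : ℤ) + 1 := by
            omega
          have e2 : min ((σ k : ℤ)) ((d : ℤ) - (i : ℤ) + 1) = (d : ℤ) - (i : ℤ) + 1 := by omega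
          rw [e1, e2]; ring
    have hS1 : ∑ i ∈ Finset.Icc (k + 1) d,
        (if i = k + 1 then min ((σ k : ℤ) - 1) ((d : ℤ) - (k : ℤ)) else 0)
        = min ((σ k : ℤ) - 1) ((d : ℤ) - (k : ℤ)) := by
      rw [Finset.sum_ite_eq' (Finset.Icc (k + 1) d) (k + 1)]
      by_cases hkd' : k + 1 ≤ d
      · rw [if_pos (Finset.mem_Icc.mpr ⟨le_refl _, hkd'⟩)]
      · have hkd2 : k = d := by omega
        subst hkd2
        rw [if_neg (by simp [Finset.mem_Icc])]
        omega
    have hfilter : (Finset.Icc (k + 1) d).filter (fun i => i ≤ d - σ k + 1)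
        = Finset.Icc (k + 1) (d - σ k + 1) := by
      ext i
      simp only [Finset.mem_filter, Finset.mem_Icc]
      omega
    have hS2 : ∑ i ∈ Finset.Icc (k + 1) d,
        (if i ≤ d - σ k + 1 then ((σ (i - 1) : ℤ) - (σ i : ℤ)) else 0)
        = - max 0 ((σ (d - σ k + 1) : ℤ) - (σ k : ℤ)) := by
      rw [← Finset.sum_filter, hfilter]
      rcases le_or_gt k (d - σ k + 1) with h | h
      · have ht := tele_sigma (fun j => (σ j : ℤ)) k (d - σ k + 1) h
        beta_reduce at ht
        rw [ht]
        have := hσmono k (d - σ k + 1) h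
        omega
      · have hempty : Finset.Icc (k + 1) (d - σ k + 1) = ∅ := by
          rw [Finset.Icc_eq_empty]; omega
        rw [hempty, Finset.sum_empty]
        have := hσmono (d - σ k + 1) k (by omega)
        omega
    rw [Finset.sum_congr rfl key, Finset.sum_add_distrib, Finset.sum_add_distrib, hS1, hS2]
    ring
  rw [hφ' k, hφ k, hA, hB, hσ'k]
  ring
end

section
/- Let R be a positive random variable (or finite positive-valued function on a finite probability space) with E[R^t] normalized so that R^t / E[R^t] has mean 1 for each t. Then for 0 < t_1 < t_2, Var(R^{t_2}/E[R^{t_2}]) ≥ Var(R^{t_1}/E[R^{t_1}]); i.e., the normalized variance of the power family R^t is nondecreasing in t > 0. Equivalently, E[R^{2t}]/E[R^t]^2 is nondecreasing in t for t > 0. -/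
open Finset

/-- Log-convexity of moments: for `0 < θ < 1`,
`∑ w S^(θa+(1-θ)b) ≤ (∑ w S^a)^θ (∑ w S^b)^(1-θ)`. -/
lemma moment_logconvex {n : ℕ} (w S : Fin n → ℝ) (hw : ∀ i, 0 < w i)
    (hS : ∀ i, 0 < S i) (a b θ : ℝ) (h0 : 0 < θ) (h1 : θ < 1) :
    ∑ i, w i * S i ^ (θ * a + (1 - θ) * b) ≤
      (∑ i, w i * S i ^ a) ^ θ * (∑ i, w i * S i ^ b) ^ (1 - θ) := by
  have h1' : 0 < 1 - θ := by linarith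
  have hpq : Real.HolderConjugate θ⁻¹ (1 - θ)⁻¹ := by
    rw [Real.holderConjugate_iff]
    constructor
    · exact (one_lt_inv₀ h0).2 h1
    · simp [inv_inv]
  have hfa : ∀ i : Fin n, 0 ≤ w i * S i ^ a := fun i =>
    mul_nonneg (hw i).le (Real.rpow_pos_of_pos (hS i) a).le
  have hfb : ∀ i : Fin n, 0 ≤ w i * S i ^ b := fun i =>
    mul_nonneg (hw i).le (Real.rpow_pos_of_pos (hS i) b).le
  have hf : ∀ i ∈ (univ : Finset (Fin n)), 0 ≤ (w i * S i ^ a) ^ θ := fun i _ =>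
    Real.rpow_nonneg (hfa i) _
  have hg : ∀ i ∈ (univ : Finset (Fin n)), 0 ≤ (w i * S i ^ b) ^ (1 - θ) := fun i _ =>
    Real.rpow_nonneg (hfb i) _
  have key := Real.inner_le_Lp_mul_Lq_of_nonneg univ hpq hf hg
  have eA : ∑ i : Fin n, ((w i * S i ^ a) ^ θ) ^ θ⁻¹ = ∑ i, w i * S i ^ a :=
    Finset.sum_congr rfl fun i _ => by
      rw [← Real.rpow_mul (hfa i), mul_inv_cancel₀ h0.ne', Real.rpow_one]
  have eB : ∑ i : Fin n, ((w i * S i ^ b) ^ (1 - θ)) ^ (1 - θ)⁻¹ = ∑ i, w i * S i ^ b :=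
    Finset.sum_congr rfl fun i _ => by
      rw [← Real.rpow_mul (hfb i), mul_inv_cancel₀ h1'.ne', Real.rpow_one]
  rw [eA, eB, one_div, one_div, inv_inv, inv_inv] at key
  refine le_trans (le_of_eq ?_) key
  refine Finset.sum_congr rfl fun i _ => ?_
  rw [Real.mul_rpow (hw i).le (Real.rpow_pos_of_pos (hS i) a).le,
    Real.mul_rpow (hw i).le (Real.rpow_pos_of_pos (hS i) b).le,
    ← Real.rpow_mul (hS i).le, ← Real.rpow_mul (hS i).le,
    show w i ^ θ * S i ^ (a * θ) * (w i ^ (1 - θ) * S i ^ (b * (1 - θ))) =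
      w i ^ θ * w i ^ (1 - θ) * (S i ^ (a * θ) * S i ^ (b * (1 - θ))) from by ring,
    ← Real.rpow_add (hw i), ← Real.rpow_add (hS i),
    show θ + (1 - θ) = 1 from by ring, Real.rpow_one,
    show a * θ + b * (1 - θ) = θ * a + (1 - θ) * b from by ring]

/-- For a positive random variable `R` on a finite probability space, the variance of
the mean-one normalization `R^t / E[R^t]` is nondecreasing in `t > 0`: for
`0 < t₁ < t₂`, `Var(R^{t₁}/E[R^{t₁}]) ≤ Var(R^{t₂}/E[R^{t₂}])`; equivalently
`E[R^{2t}]/E[R^t]²` is nondecreasing in `t > 0`. -/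
theorem power_family_variance_monotone (n : ℕ) (hn : 0 < n)
    (w R : Fin n → ℝ) (hw : ∀ i, 0 < w i) (hw1 : ∑ i, w i = 1)
    (hR : ∀ i, 0 < R i) :
    (∀ t₁ t₂ : ℝ, 0 < t₁ → t₁ < t₂ →
      (∑ i, w i * (R i ^ t₁ / (∑ j, w j * R j ^ t₁) - 1) ^ 2) ≤
        ∑ i, w i * (R i ^ t₂ / (∑ j, w j * R j ^ t₂) - 1) ^ 2) ∧
    (∀ t₁ t₂ : ℝ, 0 < t₁ → t₁ < t₂ →
      (∑ i, w i * R i ^ (2 * t₁)) / (∑ i, w i * R i ^ t₁) ^ 2 ≤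
        (∑ i, w i * R i ^ (2 * t₂)) / (∑ i, w i * R i ^ t₂) ^ 2) := by
  have : Nonempty (Fin n) := Fin.pos_iff_nonempty.mp hn
  have hne : (univ : Finset (Fin n)).Nonempty := univ_nonempty
  have hμ : ∀ t : ℝ, 0 < ∑ j, w j * R j ^ t := fun t =>
    Finset.sum_pos (fun i _ => mul_pos (hw i) (Real.rpow_pos_of_pos (hR i) t)) hne
  have hkey : ∀ t₁ t₂ : ℝ, 0 < t₁ → t₁ < t₂ →
      (∑ i, w i * R i ^ (2 * t₁)) * (∑ i, w i * R i ^ t₂) ^ 2 ≤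
        (∑ i, w i * R i ^ t₁) ^ 2 * (∑ i, w i * R i ^ (2 * t₂)) := by
    intro t₁ t₂ h1 h12
    have hDpos : (0 : ℝ) < 2 * t₂ - t₁ := by linarith
    set D := 2 * t₂ - t₁ with hD
    set θ₁ := (2 * t₂ - 2 * t₁) / D with hθ₁
    set θ₂ := t₂ / D with hθ₂
    have hθ₁0 : 0 < θ₁ := div_pos (by linarith) hDpos
    have hθ₁1 : θ₁ < 1 := (div_lt_one hDpos).2 (by linarith)
    have hθ₂0 : 0 < θ₂ := div_pos (by linarith) hDpos
    have hθ₂1 : θ₂ < 1 := (div_lt_one hDpos).2 (by linarith)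
    have e1 : θ₁ * t₁ + (1 - θ₁) * (2 * t₂) = 2 * t₁ := by
      rw [hθ₁, hD]; field_simp [(show 2 * t₂ - t₁ ≠ 0 from hDpos.ne')]; ring
    have e2 : θ₂ * t₁ + (1 - θ₂) * (2 * t₂) = t₂ := by
      rw [hθ₂, hD, one_sub_div (show 2 * t₂ - t₁ ≠ 0 from hDpos.ne'), div_mul_eq_mul_div,
        div_mul_eq_mul_div, ← add_div, div_eq_iff (show 2 * t₂ - t₁ ≠ 0 from hDpos.ne')]; ring
    have m1 := moment_logconvex w R hw hR t₁ (2 * t₂) θ₁ hθ₁0 hθ₁1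
    have m2 := moment_logconvex w R hw hR t₁ (2 * t₂) θ₂ hθ₂0 hθ₂1
    rw [e1] at m1
    rw [e2] at m2
    set A := ∑ i, w i * R i ^ t₁ with hA'
    set B := ∑ i, w i * R i ^ (2 * t₂) with hB'
    have hA : 0 < A := hμ t₁
    have hB : 0 < B := hμ (2 * t₂)
    have hμ2 : 0 ≤ ∑ i, w i * R i ^ t₂ := (hμ t₂).le
    have hθsum : θ₁ + 2 * θ₂ = 2 := by rw [hθ₁, hθ₂, hD]; field_simp [(show 2 * t₂ - t₁ ≠ 0 from hDpos.ne')]; ring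
    calc (∑ i, w i * R i ^ (2 * t₁)) * (∑ i, w i * R i ^ t₂) ^ 2
        ≤ (A ^ θ₁ * B ^ (1 - θ₁)) * (A ^ θ₂ * B ^ (1 - θ₂)) ^ 2 := by
          apply mul_le_mul m1 (pow_le_pow_left₀ hμ2 m2 2) (by positivity) (by positivity)
      _ = A ^ (θ₁ + (θ₂ + θ₂)) * B ^ ((1 - θ₁) + ((1 - θ₂) + (1 - θ₂))) := by
          rw [sq, Real.rpow_add hA, Real.rpow_add hA, Real.rpow_add hB, Real.rpow_add hB]
          ring
      _ = A ^ (2 : ℝ) * B ^ (1 : ℝ) := by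
          rw [show θ₁ + (θ₂ + θ₂) = 2 from by linarith,
            show (1 - θ₁) + ((1 - θ₂) + (1 - θ₂)) = 1 from by linarith]
      _ = A ^ 2 * B := by rw [Real.rpow_two, Real.rpow_one]
  have part2 : ∀ t₁ t₂ : ℝ, 0 < t₁ → t₁ < t₂ →
      (∑ i, w i * R i ^ (2 * t₁)) / (∑ i, w i * R i ^ t₁) ^ 2 ≤
        (∑ i, w i * R i ^ (2 * t₂)) / (∑ i, w i * R i ^ t₂) ^ 2 := by
    intro t₁ t₂ h1 h12
    rw [div_le_div_iff₀ (pow_pos (hμ t₁) 2) (pow_pos (hμ t₂) 2)]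
    have := hkey t₁ t₂ h1 h12
    linarith
  have expand : ∀ t : ℝ, ∑ i, w i * (R i ^ t / (∑ j, w j * R j ^ t) - 1) ^ 2 =
      (∑ i, w i * R i ^ (2 * t)) / (∑ i, w i * R i ^ t) ^ 2 - 1 := by
    intro t
    have hm0 : 0 < ∑ j, w j * R j ^ t := hμ t
    set m := ∑ j, w j * R j ^ t with hm
    have term : ∀ i : Fin n, w i * (R i ^ t / m - 1) ^ 2 =
        (w i * R i ^ (2 * t)) / m ^ 2 - 2 * ((w i * R i ^ t) / m) + w i := by
      intro i
      have h2 : R i ^ (2 * t) = R i ^ t * R i ^ t := by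
        rw [two_mul, Real.rpow_add (hR i)]
      rw [h2]
      field_simp [h2]
      ring
    rw [Finset.sum_congr rfl fun i _ => term i, Finset.sum_add_distrib,
      Finset.sum_sub_distrib, ← Finset.sum_div, ← Finset.mul_sum, ← Finset.sum_div,
      hw1, ← hm, div_self hm0.ne']
    ring
  refine ⟨fun t₁ t₂ h1 h12 => ?_, part2⟩
  rw [expand t₁, expand t₂]
  have := part2 t₁ t₂ h1 h12
  linarith
end
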